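/- arXiv:2407.05661 — 4 statements merged into one kernel-verified Lean document; each statement's English description precedes it below -/
import Mathlib

section
/- Let r > 0, T > 0, λ ∈ ℝ and set ϖ = 1/(r²(1+r²)). Then there exists a C² function u : ℝ² → ℝ with u(t,θ+2π) = u(t,θ) for all (t,θ), not identically zero on [0,T]×ℝ, satisfying (1/(1+r²))∂²u/∂t² + (1/r²)∂²u/∂θ² + (ϖ + λ)u = 0 at every point of [0,T]×ℝ and the Dirichlet conditions u(0,θ) = u(T,θ) = 0 for all θ, if and only if there exist integers m ≥ 1 and n ≥ 0 such that λ = m²π²/((1+r²)T²) + (n²(1+r²) − 1)/(r²(1+r²)). -/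
open Real

open Set intervalIntegral MeasureTheory


lemma ode_lin_unique (L : (ℝ × ℝ) →L[ℝ] (ℝ × ℝ)) {f g : ℝ → ℝ × ℝ} {a b : ℝ}
    (hf : ∀ t ∈ Icc a b, HasDerivAt f (L (f t)) t)
    (hg : ∀ t, HasDerivAt g (L (g t)) t)
    (ha : f a = g a) : EqOn f g (Icc a b) := by
  rcases le_or_gt a b with hab | hab
  · refine ODE_solution_unique_of_mem_Icc_right (v := fun _ p => L p) (s := fun _ => univ)
      (fun _ _ => L.lipschitz.lipschitzOnWith) ?_ ?_ (fun _ _ => trivial) ?_ ?_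
      (fun _ _ => trivial) ha
    · exact fun t ht => ((hf t ht).continuousAt).continuousWithinAt
    · exact fun t ht => ((hf t (Ico_subset_Icc_self ht)).hasDerivWithinAt)
    · exact fun t _ => (hg t).continuousAt.continuousWithinAt
    · exact fun t _ => (hg t).hasDerivWithinAt
  · intro t ht; exact absurd ht (by simp [Icc_eq_empty_iff.mpr hab.not_ge])

lemma dirichlet_ode (c T : ℝ) (hT : 0 < T) (v v' : ℝ → ℝ)
    (hv : ∀ t, HasDerivAt v (v' t) t)
    (hv' : ∀ t ∈ Icc 0 T, HasDerivAt v' (c * v t) t)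
    (h0 : v 0 = 0) (hTv : v T = 0)
    (hne : ∃ t ∈ Icc (0:ℝ) T, v t ≠ 0) :
    ∃ m : ℕ, 1 ≤ m ∧ c = -((m:ℝ)^2 * π^2 / T^2) := by
  classical
  set α := v' 0 with hα
  set L : (ℝ × ℝ) →L[ℝ] (ℝ × ℝ) :=
    (ContinuousLinearMap.snd ℝ ℝ ℝ).prod (c • ContinuousLinearMap.fst ℝ ℝ ℝ) with hL
  have hLapp : ∀ p : ℝ × ℝ, L p = (p.2, c * p.1) := fun p => rfl
  have hf : ∀ t ∈ Icc (0:ℝ) T, HasDerivAt (fun t => (v t, v' t)) (L (v t, v' t)) t := by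
    intro t ht
    rw [hLapp]
    exact (hv t).prodMk (hv' t ht)
  -- helper: if g solves the ODE with g 0 = (0, α), then v agrees with g.1 on [0, T]
  have key : ∀ s s' : ℝ → ℝ, (∀ t, HasDerivAt s (s' t) t) → (∀ t, HasDerivAt s' (c * s t) t) →
      s 0 = 0 → s' 0 = α → ∀ t ∈ Icc (0:ℝ) T, v t = s t := by
    intro s s' hs hs' hs0 hs'0 t ht
    have hg : ∀ t, HasDerivAt (fun t => (s t, s' t)) (L (s t, s' t)) t := by
      intro t; rw [hLapp]; exact (hs t).prodMk (hs' t)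
    have := ode_lin_unique L hf hg (by simp [h0, hs0, hs'0, hα]) ht
    exact congrArg Prod.fst this
  rcases lt_trichotomy c 0 with hc | hc | hc
  · -- oscillatory case
    set k := Real.sqrt (-c) with hk
    have hk0 : 0 < k := Real.sqrt_pos.mpr (by linarith)
    have hk2 : k ^ 2 = -c := Real.sq_sqrt (by linarith)
    have hs : ∀ t, HasDerivAt (fun t => (α / k) * Real.sin (k * t)) (α * Real.cos (k * t)) t := by
      intro t
      have h1 : HasDerivAt (fun t : ℝ => k * t) k t := by
        simpa using (hasDerivAt_id t).const_mul k
      have := ((Real.hasDerivAt_sin (k * t)).comp t h1).const_mul (α / k)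
      refine this.congr_deriv ?_
      field_simp
    have hs' : ∀ t, HasDerivAt (fun t => α * Real.cos (k * t)) (c * ((α / k) * Real.sin (k * t))) t := by
      intro t
      have h1 : HasDerivAt (fun t : ℝ => k * t) k t := by
        simpa using (hasDerivAt_id t).const_mul k
      have := ((Real.hasDerivAt_cos (k * t)).comp t h1).const_mul α
      refine this.congr_deriv ?_
      have : c = -(k^2) := by rw [hk2]; ring
      rw [this]
      field_simp
    have hveq := key _ _ hs hs' (by simp) (by simp) 
    have hvT := hveq T ⟨le_of_lt hT, le_refl T⟩
    have hαne : α ≠ 0 := by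
      rintro rfl0
      obtain ⟨t₀, ht₀, hvt₀⟩ := hne
      exact hvt₀ (by simpa [rfl0] using hveq t₀ ht₀)
    have hsinT : Real.sin (k * T) = 0 := by
      have hprod : α / k * Real.sin (k * T) = 0 := by rw [← hvT, hTv]
      rcases mul_eq_zero.mp hprod with h | h
      · rcases div_eq_zero_iff.mp h with h' | h'
        · exact absurd h' hαne
        · exact absurd h' hk0.ne'
      · exact h
    obtain ⟨n, hn⟩ := Real.sin_eq_zero_iff.mp hsinT
    have hkT : 0 < k * T := mul_pos hk0 hT
    have hn0 : 0 < n := by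
      by_contra hcon
      push_neg at hcon
      have : (n:ℝ) * π ≤ 0 := mul_nonpos_of_nonpos_of_nonneg (by exact_mod_cast hcon) pi_pos.le
      linarith [hn ▸ hkT]
    refine ⟨n.toNat, by omega, ?_⟩
    have hnc : ((n.toNat : ℕ) : ℝ) = (n : ℝ) := by
      exact_mod_cast congrArg (Int.cast : ℤ → ℝ) (Int.toNat_of_nonneg hn0.le)
    have hk' : k = (n:ℝ) * π / T := by
      field_simp at hn ⊢
      linarith [hn]
    have : -c = k ^ 2 := hk2.symm
    rw [hk'] at this
    rw [hnc]
    rw [← neg_eq_iff_eq_neg] at *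
    rw [this]
    field_simp
  · -- c = 0
    exfalso
    have hs : ∀ t, HasDerivAt (fun t : ℝ => α * t) α t := by
      intro t; simpa using (hasDerivAt_id t).const_mul α
    have hs' : ∀ t, HasDerivAt (fun _ : ℝ => α) (c * (α * t)) t := by
      intro t; simpa [hc] using (hasDerivAt_const t α)
    have hveq := key _ _ hs hs' (by simp) (by simp)
    have hvT := hveq T ⟨hT.le, le_refl T⟩
    have hα0 : α = 0 := by
      rw [hTv] at hvT
      rcases mul_eq_zero.mp hvT.symm with h | h
      · exact h
      · exact absurd h hT.ne'
    obtain ⟨t₀, ht₀, hvt₀⟩ := hne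
    exact hvt₀ (by simpa [hα0] using hveq t₀ ht₀)
  · -- c > 0 : hyperbolic
    exfalso
    set k := Real.sqrt c with hk
    have hk0 : 0 < k := Real.sqrt_pos.mpr hc
    have hk2 : k ^ 2 = c := Real.sq_sqrt hc.le
    have hs : ∀ t, HasDerivAt (fun t => (α / k) * Real.sinh (k * t)) (α * Real.cosh (k * t)) t := by
      intro t
      have h1 : HasDerivAt (fun t : ℝ => k * t) k t := by
        simpa using (hasDerivAt_id t).const_mul k
      have := ((Real.hasDerivAt_sinh (k * t)).comp t h1).const_mul (α / k)
      refine this.congr_deriv ?_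
      field_simp
    have hs' : ∀ t, HasDerivAt (fun t => α * Real.cosh (k * t)) (c * ((α / k) * Real.sinh (k * t))) t := by
      intro t
      have h1 : HasDerivAt (fun t : ℝ => k * t) k t := by
        simpa using (hasDerivAt_id t).const_mul k
      have := ((Real.hasDerivAt_cosh (k * t)).comp t h1).const_mul α
      refine this.congr_deriv ?_
      rw [← hk2]
      field_simp
    have hveq := key _ _ hs hs' (by simp) (by simp)
    have hvT := hveq T ⟨hT.le, le_refl T⟩
    have hα0 : α = 0 := by
      rw [hTv] at hvT
      have hsh : Real.sinh (k * T) ≠ 0 := ne_of_gt (by positivity)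
      have := hvT.symm
      rcases mul_eq_zero.mp this with h | h
      · rcases div_eq_zero_iff.mp h with h' | h'
        · exact h'
        · exact absurd h' hk0.ne'
      · exact absurd h hsh
    obtain ⟨t₀, ht₀, hvt₀⟩ := hne
    exact hvt₀ (by simpa [hα0] using hveq t₀ ht₀)
/-- partial derivative in the first variable of a C¹ function of two real variables -/
lemma partial_fst {f : ℝ × ℝ → ℝ} (hf : Differentiable ℝ f) (t θ : ℝ) :
    HasDerivAt (fun x => f (x, θ)) (fderiv ℝ f (t, θ) (1, 0)) t := by
  have hg : HasDerivAt (fun x : ℝ => (x, θ)) ((1:ℝ), (0:ℝ)) t :=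
    (hasDerivAt_id t).prodMk (hasDerivAt_const t θ)
  exact (hf (t, θ)).hasFDerivAt.comp_hasDerivAt t hg

lemma partial_snd {f : ℝ × ℝ → ℝ} (hf : Differentiable ℝ f) (t θ : ℝ) :
    HasDerivAt (fun y => f (t, y)) (fderiv ℝ f (t, θ) (0, 1)) θ := by
  have hg : HasDerivAt (fun y : ℝ => (t, y)) ((0:ℝ), (1:ℝ)) θ :=
    (hasDerivAt_const θ t).prodMk (hasDerivAt_id θ)
  exact (hf (t, θ)).hasFDerivAt.comp_hasDerivAt θ hg

lemma contDiff_partial {f : ℝ × ℝ → ℝ} (hf : ContDiff ℝ 2 f) (v : ℝ × ℝ) :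
    ContDiff ℝ 1 (fun q => fderiv ℝ f q v) :=
  (hf.fderiv_right (by norm_num)).clm_apply contDiff_const

lemma continuous_partial2 {f : ℝ × ℝ → ℝ} (hf : ContDiff ℝ 1 f) (v : ℝ × ℝ) :
    Continuous (fun q => fderiv ℝ f q v) :=
  ((hf.fderiv_right (m := 0) (by norm_num)).clm_apply contDiff_const).continuous

/-- differentiation under the interval integral, for continuous integrands -/
lemma deriv_under_integral {g g' : ℝ × ℝ → ℝ} (hg : Continuous g) (hg' : Continuous g')
    (hd : ∀ t θ : ℝ, HasDerivAt (fun x => g (x, θ)) (g' (t, θ)) t)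
    {w : ℝ → ℝ} (hw : Continuous w) (t₀ : ℝ) :
    HasDerivAt (fun t => ∫ θ in (0:ℝ)..(2*π), g (t, θ) * w θ)
      (∫ θ in (0:ℝ)..(2*π), g' (t₀, θ) * w θ) t₀ := by
  obtain ⟨M, hM⟩ := (isCompact_Icc (a := t₀ - 1) (b := t₀ + 1)).prod
    (isCompact_uIcc (a := (0:ℝ)) (b := 2*π)) |>.exists_bound_of_continuousOn
    ((hg'.mul (hw.comp continuous_snd)).continuousOn)
  have hM0 : 0 ≤ M := le_trans (norm_nonneg _)
    (hM (t₀, 0) ⟨by constructor <;> simp, Set.left_mem_uIcc⟩)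
  have key := intervalIntegral.hasDerivAt_integral_of_dominated_loc_of_deriv_le
    (F := fun x θ => g (x, θ) * w θ) (F' := fun x θ => g' (x, θ) * w θ)
    (x₀ := t₀) (a := 0) (b := 2*π) (μ := volume) (bound := fun _ => M)
    (Metric.ball_mem_nhds t₀ one_pos)
    (Filter.Eventually.of_forall fun x =>
      ((hg.comp (Continuous.prodMk_right x)).mul hw).aestronglyMeasurable)
    (((hg.comp (Continuous.prodMk_right t₀)).mul hw).intervalIntegrable 0 (2*π))
    (((hg'.comp (Continuous.prodMk_right t₀)).mul hw).aestronglyMeasurable)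
    (Filter.Eventually.of_forall fun θ hθ x hx => by
      refine hM (x, θ) ⟨?_, Set.Ioc_subset_Icc_self hθ⟩
      have := Metric.mem_ball.mp hx
      rw [Real.dist_eq] at this
      constructor <;> [linarith [abs_le.mp this.le] ; linarith [(abs_le.mp this.le).2]]
      )
    (intervalIntegrable_const)
    (Filter.Eventually.of_forall fun θ _ x _ => (hd x θ).mul_const (w θ))
  exact key.2

/-- double integration by parts over a period: `∫ h'' w = ∫ h w''` -/
lemma ibp_period {h h' h'' w w' w'' : ℝ → ℝ}
    (hh : ∀ x, HasDerivAt h (h' x) x) (hh' : ∀ x, HasDerivAt h' (h'' x) x)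
    (hw : ∀ x, HasDerivAt w (w' x) x) (hw' : ∀ x, HasDerivAt w' (w'' x) x)
    (ch'' : Continuous h'') (cw'' : Continuous w'')
    (ph : h (2*π) = h 0) (ph' : h' (2*π) = h' 0)
    (pw : w (2*π) = w 0) (pw' : w' (2*π) = w' 0) :
    ∫ θ in (0:ℝ)..(2*π), h'' θ * w θ = ∫ θ in (0:ℝ)..(2*π), h θ * w'' θ := by
  have ch' : Continuous h' := by
    have : Differentiable ℝ h' := fun x => (hh' x).differentiableAt
    exact this.continuous
  have ch : Continuous h := by
    have : Differentiable ℝ h := fun x => (hh x).differentiableAt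
    exact this.continuous
  have cw' : Continuous w' := by
    have : Differentiable ℝ w' := fun x => (hw' x).differentiableAt
    exact this.continuous
  have cw : Continuous w := by
    have : Differentiable ℝ w := fun x => (hw x).differentiableAt
    exact this.continuous
  have I1 : ∫ θ in (0:ℝ)..(2*π), w θ * h'' θ
      = w (2*π) * h' (2*π) - w 0 * h' 0 - ∫ θ in (0:ℝ)..(2*π), w' θ * h' θ :=
    integral_mul_deriv_eq_deriv_mul (fun x _ => hw x) (fun x _ => hh' x)
      (cw'.intervalIntegrable _ _) (ch''.intervalIntegrable _ _)
  have I2 : ∫ θ in (0:ℝ)..(2*π), h θ * w'' θ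
      = h (2*π) * w' (2*π) - h 0 * w' 0 - ∫ θ in (0:ℝ)..(2*π), h' θ * w' θ :=
    integral_mul_deriv_eq_deriv_mul (fun x _ => hh x) (fun x _ => hw' x)
      (ch'.intervalIntegrable _ _) (cw''.intervalIntegrable _ _)
  rw [ph', pw] at I1
  rw [ph, pw'] at I2
  simp only [sub_self, zero_sub] at I1 I2
  calc ∫ θ in (0:ℝ)..(2*π), h'' θ * w θ
      = ∫ θ in (0:ℝ)..(2*π), w θ * h'' θ := by simp [mul_comm]
    _ = - ∫ θ in (0:ℝ)..(2*π), w' θ * h' θ := I1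
    _ = - ∫ θ in (0:ℝ)..(2*π), h' θ * w' θ := by simp [mul_comm]
    _ = ∫ θ in (0:ℝ)..(2*π), h θ * w'' θ := by rw [I2]

lemma exists_fourier_mode {g : ℝ → ℝ} (hg : Continuous g) (hper : ∀ θ, g (θ + 2*π) = g θ)
    (h0 : ∃ θ₀ : ℝ, g θ₀ ≠ 0) :
    ∃ n : ℕ, (∫ θ in (0:ℝ)..(2*π), g θ * Real.cos (n*θ)) ≠ 0 ∨
      (∫ θ in (0:ℝ)..(2*π), g θ * Real.sin (n*θ)) ≠ 0 := by
  by_contra hcon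
  push_neg at hcon
  obtain ⟨θ₀, hθ₀⟩ := h0
  haveI : Fact (0 < 2*π) := ⟨by positivity⟩
  set G : ℝ → ℂ := fun θ => (g θ : ℂ) with hGdef
  have hGc : Continuous G := Complex.continuous_ofReal.comp hg
  set F : AddCircle (2*π) → ℂ := AddCircle.liftIco (2*π) 0 G with hFdef
  have hFc : Continuous F := by
    apply AddCircle.liftIco_continuous
    · show G 0 = G (0 + 2*π)
      have h := hper 0
      rw [zero_add] at h
      simp only [hGdef]
      rw [zero_add, h]
    · exact hGc.continuousOn
  have hcast : ∀ n : ℤ, 0 ≤ n → ((n.toNat : ℕ) : ℝ) = (n:ℝ) := by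
    intro n hn
    have := Int.toNat_of_nonneg hn
    exact_mod_cast congrArg (Int.cast : ℤ → ℝ) this
  have hcosZ : ∀ n : ℤ, (∫ θ in (0:ℝ)..(2*π), g θ * Real.cos (n*θ)) = 0 := by
    intro n
    rcases le_or_gt 0 n with hn | hn
    · have h1 := (hcon n.toNat).1
      rwa [hcast n hn] at h1
    · have h1 := (hcon (-n).toNat).1
      rw [hcast (-n) (by omega)] at h1
      push_cast at h1
      simpa [neg_mul, Real.cos_neg] using h1
  have hsinZ : ∀ n : ℤ, (∫ θ in (0:ℝ)..(2*π), g θ * Real.sin (n*θ)) = 0 := by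
    intro n
    rcases le_or_gt 0 n with hn | hn
    · have h1 := (hcon n.toNat).2
      rwa [hcast n hn] at h1
    · have h1 := (hcon (-n).toNat).2
      rw [hcast (-n) (by omega)] at h1
      push_cast at h1
      have h2 : -∫ θ in (0:ℝ)..(2*π), g θ * Real.sin (n*θ) = 0 := by
        rw [← intervalIntegral.integral_neg]
        simpa [neg_mul, Real.sin_neg, mul_neg] using h1
      linarith
  have hcoeff : ∀ n : ℤ, fourierCoeff F n = 0 := by
    intro n
    rw [hFdef, fourierCoeff_liftIco_eq G n, fourierCoeffOn_eq_integral]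
    suffices h : (∫ x in (0:ℝ)..(0 + 2*π),
        fourier (-n) (x : AddCircle ((0 + 2*π) - 0)) • G x) = 0 by
      rw [h, smul_zero]
    have heq : ∀ x : ℝ, fourier (-n) (x : AddCircle ((0 + 2*π) - 0)) • G x
        = (↑(g x * Real.cos (n*x)) : ℂ) - (↑(g x * Real.sin (n*x)) : ℂ) * Complex.I := by
      intro x
      rw [fourier_coe_apply]
      have harg : 2 * ↑π * Complex.I * ↑(-n : ℤ) * ↑x / ↑((0:ℝ) + 2*π - 0)
          = ↑(-((n:ℝ)*x)) * Complex.I := by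
        have hπ : (π:ℂ) ≠ 0 := by exact_mod_cast Real.pi_ne_zero
        push_cast
        field_simp
        ring
      rw [harg, Complex.exp_mul_I]
      simp only [hGdef, smul_eq_mul, ← Complex.ofReal_cos, ← Complex.ofReal_sin,
        Real.cos_neg, Real.sin_neg]
      push_cast
      ring
    simp_rw [heq]
    have int1 : IntervalIntegrable (fun x : ℝ => (↑(g x * Real.cos (n*x)) : ℂ))
        volume 0 (0 + 2*π) := by
      apply Continuous.intervalIntegrable
      continuity
    have int2 : IntervalIntegrable (fun x : ℝ => (↑(g x * Real.sin (n*x)) : ℂ) * Complex.I)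
        volume 0 (0 + 2*π) := by
      apply Continuous.intervalIntegrable
      continuity
    rw [intervalIntegral.integral_sub int1 int2, intervalIntegral.integral_mul_const,
      intervalIntegral.integral_ofReal, intervalIntegral.integral_ofReal]
    rw [zero_add, hcosZ n, hsinZ n]
    simp
  -- conclude F = 0
  have hmem : MemLp F 2 AddCircle.haarAddCircle :=
    hFc.memLp_of_hasCompactSupport (isClosed_tsupport F).isCompact
  set F₀ := hmem.toLp F with hF₀
  have hrepr : ∀ i : ℤ, fourierBasis.repr F₀ i = 0 := by
    intro i
    rw [fourierBasis_repr]
    rw [show fourierCoeff (F₀ : AddCircle (2*π) → ℂ) i = fourierCoeff F i from by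
      unfold fourierCoeff
      exact integral_congr_ae ((hmem.coeFn_toLp).mono fun x hx => congrArg (fun z => fourier (-i) x • z) hx)]
    exact hcoeff i
  have hF₀0 : F₀ = 0 := by
    rw [← (fourierBasis (T := 2*π)).repr.map_eq_zero_iff]
    ext i
    simpa using hrepr i
  have hFae : F =ᵐ[AddCircle.haarAddCircle] 0 := by
    have h1 : (F₀ : AddCircle (2*π) → ℂ) =ᵐ[AddCircle.haarAddCircle] F := hmem.coeFn_toLp
    have h2 : (F₀ : AddCircle (2*π) → ℂ) =ᵐ[AddCircle.haarAddCircle] 0 := by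
      rw [hF₀0]; exact Lp.coeFn_zero _ _ _
    exact h1.symm.trans h2
  have hF0 : F = 0 := (hFc.ae_eq_iff_eq AddCircle.haarAddCircle continuous_const).mp hFae
  -- contradiction
  have hper' : Function.Periodic g (2*π) := hper
  obtain ⟨y, hy, hgy⟩ := hper'.exists_mem_Ico₀ (by positivity) θ₀
  apply hθ₀
  rw [hgy]
  have : F (y : AddCircle (2*π)) = G y := AddCircle.liftIco_coe_apply (by simpa using hy)
  rw [hF0] at this
  have h3 : (g y : ℂ) = 0 := this.symm
  exact_mod_cast h3

lemma reverse_dir (r T lam : ℝ) (hr : 0 < r) (hT : 0 < T)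
    (m n : ℕ) (hm : 1 ≤ m)
    (hlam : lam = (m : ℝ) ^ 2 * π ^ 2 / ((1 + r ^ 2) * T ^ 2)
        + ((n : ℝ) ^ 2 * (1 + r ^ 2) - 1) / (r ^ 2 * (1 + r ^ 2))) :
    (∃ u : ℝ → ℝ → ℝ,
      ContDiff ℝ 2 (Function.uncurry u) ∧
      (∀ t θ : ℝ, u t (θ + 2 * π) = u t θ) ∧
      (∃ t ∈ Set.Icc (0 : ℝ) T, ∃ θ : ℝ, u t θ ≠ 0) ∧
      (∀ t ∈ Set.Icc (0 : ℝ) T, ∀ θ : ℝ,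
        (1 / (1 + r ^ 2)) * deriv (deriv (fun x => u x θ)) t
          + (1 / r ^ 2) * deriv (deriv (u t)) θ
          + (1 / (r ^ 2 * (1 + r ^ 2)) + lam) * u t θ = 0) ∧
      (∀ θ : ℝ, u 0 θ = 0 ∧ u T θ = 0)) := by
  have h1r : (0:ℝ) < 1 + r ^ 2 := by positivity
  set c : ℝ := m * π / T with hc
  refine ⟨fun t θ => Real.sin (c * t) * Real.cos (n * θ), ?_, ?_, ?_, ?_, ?_⟩
  · -- smoothness
    have h1 : ContDiff ℝ 2 (fun p : ℝ × ℝ => Real.sin (c * p.1)) :=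
      (Real.contDiff_sin.of_le le_top).comp ((contDiff_const.mul contDiff_fst))
    have h2 : ContDiff ℝ 2 (fun p : ℝ × ℝ => Real.cos ((n:ℝ) * p.2)) :=
      (Real.contDiff_cos.of_le le_top).comp ((contDiff_const.mul contDiff_snd))
    exact h1.mul h2
  · -- periodicity
    intro t θ
    have hp : Function.Periodic Real.cos ((n:ℕ) * (2*π)) := Real.cos_periodic.nat_mul n
    have := hp ((n:ℝ) * θ)
    simp only []
    rw [show (n:ℝ) * (θ + 2*π) = (n:ℝ)*θ + (n:ℕ) * (2*π) by push_cast; ring, this]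
  · -- nontrivial
    refine ⟨T / (2*m), ⟨by positivity, ?_⟩, 0, ?_⟩
    · rw [div_le_iff₀ (by positivity)]
      nlinarith [hT.le, (by exact_mod_cast hm : (1:ℝ) ≤ m)]
    · have hmne : (m:ℝ) ≠ 0 := by positivity
      have h5 : c * (T / (2*m)) = π/2 := by
        rw [hc]; field_simp
      show Real.sin (c * (T / (2*↑m))) * Real.cos ((n:ℝ) * 0) ≠ 0
      rw [h5]
      simp [Real.sin_pi_div_two]
  · -- PDE
    intro t _ θ
    show (1 / (1 + r ^ 2)) * deriv (deriv (fun x => Real.sin (c * x) * Real.cos ((n:ℝ) * θ))) t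
      + (1 / r ^ 2) * deriv (deriv (fun y => Real.sin (c * t) * Real.cos ((n:ℝ) * y))) θ
      + (1 / (r ^ 2 * (1 + r ^ 2)) + lam) * (Real.sin (c * t) * Real.cos ((n:ℝ) * θ)) = 0
    have hsin : ∀ x : ℝ, HasDerivAt (fun y : ℝ => Real.sin (c * y)) (c * Real.cos (c * x)) x := by
      intro x
      have h1 : HasDerivAt (fun y : ℝ => c * y) c x := by simpa using (hasDerivAt_id x).const_mul c
      have h2 := (Real.hasDerivAt_sin (c * x)).comp x h1
      exact (mul_comm (Real.cos (c*x)) c) ▸ h2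
    have hcos : ∀ x : ℝ, HasDerivAt (fun y : ℝ => c * Real.cos (c * y)) (-(c^2) * Real.sin (c * x)) x := by
      intro x
      have h1 : HasDerivAt (fun y : ℝ => c * y) c x := by simpa using (hasDerivAt_id x).const_mul c
      have := ((Real.hasDerivAt_cos (c * x)).comp x h1).const_mul c
      refine this.congr_deriv ?_; ring
    have hsin2 : ∀ x : ℝ, HasDerivAt (fun y : ℝ => Real.sin ((n:ℝ) * y)) ((n:ℝ) * Real.cos ((n:ℝ) * x)) x := by
      intro x
      have h1 : HasDerivAt (fun y : ℝ => (n:ℝ) * y) (n:ℝ) x := by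
        simpa using (hasDerivAt_id x).const_mul (n:ℝ)
      have h2 := (Real.hasDerivAt_sin ((n:ℝ) * x)).comp x h1
      exact (mul_comm (Real.cos ((n:ℝ)*x)) (n:ℝ)) ▸ h2
    have hcos2 : ∀ x : ℝ, HasDerivAt (fun y : ℝ => Real.cos ((n:ℝ) * y)) (-((n:ℝ) * Real.sin ((n:ℝ) * x))) x := by
      intro x
      have h1 : HasDerivAt (fun y : ℝ => (n:ℝ) * y) (n:ℝ) x := by
        simpa using (hasDerivAt_id x).const_mul (n:ℝ)
      have := (Real.hasDerivAt_cos ((n:ℝ) * x)).comp x h1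
      refine this.congr_deriv ?_; ring
    have hd1 : deriv (deriv (fun x => Real.sin (c * x) * Real.cos ((n:ℝ) * θ))) t
        = -(c^2) * Real.sin (c * t) * Real.cos ((n:ℝ) * θ) := by
      have e1 : deriv (fun x => Real.sin (c * x) * Real.cos ((n:ℝ) * θ))
          = fun x => (c * Real.cos (c * x)) * Real.cos ((n:ℝ) * θ) := by
        funext x
        exact ((hsin x).mul_const _).deriv
      rw [e1]
      have := ((hcos t).mul_const (Real.cos ((n:ℝ) * θ))).deriv
      rw [show (fun x => c * Real.cos (c * x) * Real.cos ((n:ℝ)*θ))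
          = fun y => (fun y => c * Real.cos (c * y)) y * Real.cos ((n:ℝ)*θ) from rfl]
      rw [this]
    have hd2 : deriv (deriv (fun y => Real.sin (c * t) * Real.cos ((n:ℝ) * y))) θ
        = -((n:ℝ)^2) * Real.sin (c * t) * Real.cos ((n:ℝ) * θ) := by
      have e1 : deriv (fun y => Real.sin (c * t) * Real.cos ((n:ℝ) * y))
          = fun y => Real.sin (c * t) * (-((n:ℝ) * Real.sin ((n:ℝ) * y))) := by
        funext y
        exact ((hcos2 y).const_mul _).deriv
      rw [e1]
      have := ((hsin2 θ).const_mul (Real.sin (c * t) * (-(n:ℝ)))).deriv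
      have e2 : (fun y => Real.sin (c * t) * (-((n:ℝ) * Real.sin ((n:ℝ) * y))))
          = fun y => (Real.sin (c * t) * (-(n:ℝ))) * Real.sin ((n:ℝ) * y) := by
        funext y; ring
      rw [e2, this]; ring
    rw [hd1, hd2, hlam]
    have hc2 : c^2 = (m:ℝ)^2 * π^2 / T^2 := by rw [hc]; field_simp
    rw [hc2]
    field_simp
    ring
  · -- boundary
    intro θ
    constructor
    · simp
    · have h6 : c * T = m * π := by rw [hc]; field_simp
      show Real.sin (c * T) * Real.cos ((n:ℝ) * θ) = 0
      rw [h6, Real.sin_nat_mul_pi]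
      simp

set_option maxHeartbeats 1000000 in
lemma forward_dir (r T lam : ℝ) (hr : 0 < r) (hT : 0 < T)
    (u : ℝ → ℝ → ℝ)
    (hu2 : ContDiff ℝ 2 (Function.uncurry u))
    (hper : ∀ t θ : ℝ, u t (θ + 2 * π) = u t θ)
    (hne : ∃ t ∈ Set.Icc (0 : ℝ) T, ∃ θ : ℝ, u t θ ≠ 0)
    (hpde : ∀ t ∈ Set.Icc (0 : ℝ) T, ∀ θ : ℝ,
        (1 / (1 + r ^ 2)) * deriv (deriv (fun x => u x θ)) t
          + (1 / r ^ 2) * deriv (deriv (u t)) θ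
          + (1 / (r ^ 2 * (1 + r ^ 2)) + lam) * u t θ = 0)
    (hbc : ∀ θ : ℝ, u 0 θ = 0 ∧ u T θ = 0) :
    (∃ m n : ℕ, 1 ≤ m ∧
      lam = (m : ℝ) ^ 2 * π ^ 2 / ((1 + r ^ 2) * T ^ 2)
        + ((n : ℝ) ^ 2 * (1 + r ^ 2) - 1) / (r ^ 2 * (1 + r ^ 2))) := by
  have h1r : (0:ℝ) < 1 + r ^ 2 := by positivity
  set f : ℝ × ℝ → ℝ := Function.uncurry u with hf
  have hud : Differentiable ℝ f := hu2.differentiable (by norm_num)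
  set p1 : ℝ × ℝ → ℝ := fun q => fderiv ℝ f q (1, 0) with hp1def
  set p2 : ℝ × ℝ → ℝ := fun q => fderiv ℝ f q (0, 1) with hp2def
  have hp1 : ContDiff ℝ 1 p1 := contDiff_partial hu2 (1, 0)
  have hp2 : ContDiff ℝ 1 p2 := contDiff_partial hu2 (0, 1)
  set p11 : ℝ × ℝ → ℝ := fun q => fderiv ℝ p1 q (1, 0) with hp11def
  set p22 : ℝ × ℝ → ℝ := fun q => fderiv ℝ p2 q (0, 1) with hp22def
  have c1 : Continuous p1 := hp1.continuous
  have c2 : Continuous p2 := hp2.continuous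
  have c11 : Continuous p11 := continuous_partial2 hp1 (1, 0)
  have c22 : Continuous p22 := continuous_partial2 hp2 (0, 1)
  have d1 : ∀ t θ : ℝ, HasDerivAt (fun x => u x θ) (p1 (t, θ)) t := fun t θ => partial_fst hud t θ
  have d2 : ∀ t θ : ℝ, HasDerivAt (u t) (p2 (t, θ)) θ := fun t θ => partial_snd hud t θ
  have d11 : ∀ t θ : ℝ, HasDerivAt (fun x => p1 (x, θ)) (p11 (t, θ)) t :=
    fun t θ => partial_fst (hp1.differentiable one_ne_zero) t θ
  have d22 : ∀ t θ : ℝ, HasDerivAt (fun y => p2 (t, y)) (p22 (t, θ)) θ :=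
    fun t θ => partial_snd (hp2.differentiable one_ne_zero) t θ
  have e1 : ∀ t θ : ℝ, deriv (deriv (fun x => u x θ)) t = p11 (t, θ) := by
    intro t θ
    have h : deriv (fun x => u x θ) = fun x => p1 (x, θ) := funext fun x => (d1 x θ).deriv
    rw [h]
    exact (d11 t θ).deriv
  have e2 : ∀ t θ : ℝ, deriv (deriv (u t)) θ = p22 (t, θ) := by
    intro t θ
    have h : deriv (u t) = fun y => p2 (t, y) := funext fun y => (d2 t y).deriv
    rw [h]
    exact (d22 t θ).deriv
  -- θ-periodicity of u and p2
  have hp2per : ∀ t θ : ℝ, p2 (t, θ + 2*π) = p2 (t, θ) := by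
    intro t θ
    have h1 : HasDerivAt (u t) (p2 (t, θ + 2*π)) (θ + 2*π) := d2 t (θ + 2*π)
    have hshift : HasDerivAt (fun y => u t (y + 2*π)) (p2 (t, θ + 2*π) * 1) θ :=
      h1.comp θ ((hasDerivAt_id θ).add_const (2*π))
    have hfun : (fun y => u t (y + 2*π)) = u t := funext fun y => hper t y
    rw [hfun, mul_one] at hshift
    exact hshift.unique (d2 t θ)
  -- pick a Fourier mode that does not vanish
  obtain ⟨t₀, ht₀, θs, hus⟩ := hne
  have hgcont : Continuous (u t₀) := by
    have : Continuous (fun θ : ℝ => f (t₀, θ)) := hu2.continuous.comp (Continuous.prodMk_right t₀)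
    exact this
  obtain ⟨n, hmode⟩ := exists_fourier_mode hgcont (fun θ => hper t₀ θ) ⟨θs, hus⟩
  -- package the weight function
  obtain ⟨w, w', hw, hw', cw, pw, pw', hVne⟩ :
      ∃ w w' : ℝ → ℝ, (∀ x, HasDerivAt w (w' x) x) ∧
        (∀ x, HasDerivAt w' (-(n:ℝ)^2 * w x) x) ∧ Continuous w ∧
        w (2*π) = w 0 ∧ w' (2*π) = w' 0 ∧
        (∫ θ in (0:ℝ)..(2*π), u t₀ θ * w θ) ≠ 0 := by
    have hsinD : ∀ x : ℝ, HasDerivAt (fun y : ℝ => Real.sin ((n:ℝ) * y)) ((n:ℝ) * Real.cos ((n:ℝ) * x)) x := by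
      intro x
      have h1 : HasDerivAt (fun y : ℝ => (n:ℝ) * y) (n:ℝ) x := by
        simpa using (hasDerivAt_id x).const_mul (n:ℝ)
      have h2 := (Real.hasDerivAt_sin ((n:ℝ) * x)).comp x h1
      exact (mul_comm (Real.cos ((n:ℝ)*x)) (n:ℝ)) ▸ h2
    have hcosD : ∀ x : ℝ, HasDerivAt (fun y : ℝ => Real.cos ((n:ℝ) * y)) (-((n:ℝ) * Real.sin ((n:ℝ) * x))) x := by
      intro x
      have h1 : HasDerivAt (fun y : ℝ => (n:ℝ) * y) (n:ℝ) x := by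
        simpa using (hasDerivAt_id x).const_mul (n:ℝ)
      have h2 := (Real.hasDerivAt_cos ((n:ℝ) * x)).comp x h1
      refine h2.congr_deriv ?_; ring
    have hper2 : Function.Periodic (fun y : ℝ => Real.cos ((n:ℝ) * y)) (2*π) := by
      intro x
      have := (Real.cos_periodic.nat_mul n) ((n:ℝ) * x)
      show Real.cos ((n:ℝ) * (x + 2*π)) = Real.cos ((n:ℝ) * x)
      rw [show (n:ℝ) * (x + 2*π) = (n:ℝ)*x + (n:ℕ) * (2*π) by push_cast; ring]
      exact this
    have hper3 : Function.Periodic (fun y : ℝ => Real.sin ((n:ℝ) * y)) (2*π) := by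
      intro x
      have := (Real.sin_periodic.nat_mul n) ((n:ℝ) * x)
      show Real.sin ((n:ℝ) * (x + 2*π)) = Real.sin ((n:ℝ) * x)
      rw [show (n:ℝ) * (x + 2*π) = (n:ℝ)*x + (n:ℕ) * (2*π) by push_cast; ring]
      exact this
    rcases hmode with hmode | hmode
    · refine ⟨fun θ => Real.cos ((n:ℝ) * θ), fun θ => -((n:ℝ) * Real.sin ((n:ℝ) * θ)),
        hcosD, ?_, Real.continuous_cos.comp (continuous_const.mul continuous_id), ?_, ?_,
        by exact hmode⟩
      · intro x
        have h2 := (hsinD x).const_mul (-(n:ℝ))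
        have h3 : (fun θ : ℝ => -((n:ℝ) * Real.sin ((n:ℝ)*θ))) = fun θ : ℝ => (-(n:ℝ)) * Real.sin ((n:ℝ)*θ) :=
          funext fun θ => by ring
        have h4 : -(n:ℝ)^2 * Real.cos ((n:ℝ)*x) = -(n:ℝ) * ((n:ℝ) * Real.cos ((n:ℝ)*x)) := by ring
        show HasDerivAt (fun θ : ℝ => -((n:ℝ) * Real.sin ((n:ℝ)*θ)))
          (-(n:ℝ)^2 * Real.cos ((n:ℝ)*x)) x
        rw [h3, h4]
        exact h2
      · have := hper2 0; simpa using this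
      · have h' : Real.sin ((n:ℝ) * (2*π)) = Real.sin ((n:ℝ) * 0) := by
          simpa using hper3 0
        show -((n:ℝ) * Real.sin ((n:ℝ)*(2*π))) = -((n:ℝ) * Real.sin ((n:ℝ)*0))
        rw [h']
    · refine ⟨fun θ => Real.sin ((n:ℝ) * θ), fun θ => (n:ℝ) * Real.cos ((n:ℝ) * θ),
        hsinD, ?_, Real.continuous_sin.comp (continuous_const.mul continuous_id), ?_, ?_,
        by exact hmode⟩
      · intro x
        have h2 := (hcosD x).const_mul ((n:ℝ))
        have h4 : -(n:ℝ)^2 * Real.sin ((n:ℝ)*x) = (n:ℝ) * (-((n:ℝ) * Real.sin ((n:ℝ)*x))) := by ring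
        show HasDerivAt (fun θ : ℝ => (n:ℝ) * Real.cos ((n:ℝ)*θ))
          (-(n:ℝ)^2 * Real.sin ((n:ℝ)*x)) x
        rw [h4]
        exact h2
      · have := hper3 0; simpa using this
      · have h' : Real.cos ((n:ℝ) * (2*π)) = Real.cos ((n:ℝ) * 0) := by
          simpa using hper2 0
        show (n:ℝ) * Real.cos ((n:ℝ)*(2*π)) = (n:ℝ) * Real.cos ((n:ℝ)*0)
        rw [h']
  -- the Fourier mode function V
  set K : ℝ := 1 / (r ^ 2 * (1 + r ^ 2)) + lam with hK
  set c : ℝ := (1 + r^2) * ((n:ℝ)^2 / r^2 - K) with hcdef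
  set V : ℝ → ℝ := fun t => ∫ θ in (0:ℝ)..(2*π), u t θ * w θ with hV
  set V₁ : ℝ → ℝ := fun t => ∫ θ in (0:ℝ)..(2*π), p1 (t, θ) * w θ with hV₁
  have hVd : ∀ t, HasDerivAt V (V₁ t) t := by
    intro t
    exact deriv_under_integral (hf ▸ hu2.continuous) c1 d1 cw t
  have hV₁d : ∀ t, HasDerivAt V₁ (∫ θ in (0:ℝ)..(2*π), p11 (t, θ) * w θ) t := by
    intro t
    exact deriv_under_integral c1 c11 d11 cw t
  have hVt : ∀ s : ℝ, V s = ∫ θ in (0:ℝ)..(2*π), u s θ * w θ := fun s => by rw [hV]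
  clear_value K c V V₁
  -- the ODE satisfied by V on [0, T]
  have hODE : ∀ t ∈ Set.Icc (0:ℝ) T, HasDerivAt V₁ (c * V t) t := by
    intro t ht
    have hibp : ∫ θ in (0:ℝ)..(2*π), p22 (t, θ) * w θ
        = ∫ θ in (0:ℝ)..(2*π), u t θ * (-(n:ℝ)^2 * w θ) := by
      refine ibp_period (h := u t) (h' := fun y => p2 (t, y)) (h'' := fun y => p22 (t, y))
        (hw := hw) (hw' := hw') (fun y => d2 t y) (fun y => d22 t y)
        ((c22.comp (Continuous.prodMk_right t))) (by continuity) ?_ ?_ pw pw'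
      · have := hper t 0; rwa [zero_add] at this
      · have := hp2per t 0; rwa [zero_add] at this
    have hibp2 : ∫ θ in (0:ℝ)..(2*π), p22 (t, θ) * w θ = -(n:ℝ)^2 * V t := by
      rw [hibp, hVt t, ← intervalIntegral.integral_const_mul]
      exact intervalIntegral.integral_congr fun θ _ => by ring
    -- pointwise identity for p11
    have hpt : ∀ θ : ℝ, p11 (t, θ) * w θ
        = (-((1+r^2)/r^2)) * (p22 (t, θ) * w θ) + (-((1+r^2) * K)) * (u t θ * w θ) := by
      intro θ
      have hp := hpde t ht θ
      rw [e1, e2] at hp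
      have hr2 : (r:ℝ)^2 ≠ 0 := by positivity
      have h1r' : (1 + r^2) ≠ 0 := h1r.ne'
      have : p11 (t, θ) = (-((1+r^2)/r^2)) * p22 (t, θ) + (-((1+r^2) * K)) * u t θ := by
        field_simp at hp ⊢
        linarith
      rw [this]; ring
    have hint1 : IntervalIntegrable (fun θ => (-((1+r^2)/r^2)) * (p22 (t, θ) * w θ)) volume 0 (2*π) := by
      apply Continuous.intervalIntegrable
      exact continuous_const.mul ((c22.comp (Continuous.prodMk_right t)).mul cw)
    have hint2 : IntervalIntegrable (fun θ => (-((1+r^2) * K)) * (u t θ * w θ)) volume 0 (2*π) := by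
      apply Continuous.intervalIntegrable
      exact continuous_const.mul ((hu2.continuous.comp (Continuous.prodMk_right t)).mul cw)
    have heq : ∫ θ in (0:ℝ)..(2*π), p11 (t, θ) * w θ = c * V t := by
      rw [show (fun θ => p11 (t, θ) * w θ)
          = fun θ => (-((1+r^2)/r^2)) * (p22 (t, θ) * w θ) + (-((1+r^2) * K)) * (u t θ * w θ) from
        funext hpt]
      rw [intervalIntegral.integral_add hint1 hint2,
        intervalIntegral.integral_const_mul, intervalIntegral.integral_const_mul, hibp2,
        ← hVt t, hcdef]
      have hr2 : (r:ℝ)^2 ≠ 0 := by positivity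
      field_simp
      ring
    rw [← heq]
    exact hV₁d t
  -- boundary values of V
  have hV0 : V 0 = 0 := by
    rw [hVt 0]
    rw [show (fun θ => u 0 θ * w θ) = fun θ => (0:ℝ) from
      funext fun θ => by rw [(hbc θ).1]; ring]
    simp
  have hVT : V T = 0 := by
    rw [hVt T]
    rw [show (fun θ => u T θ * w θ) = fun θ => (0:ℝ) from
      funext fun θ => by rw [(hbc θ).2]; ring]
    simp
  -- apply the ODE classification
  obtain ⟨m, hm, hmc⟩ := dirichlet_ode c T hT V V₁ hVd hODE hV0 hVT ⟨t₀, ht₀, by rw [hVt t₀]; exact hVne⟩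
  refine ⟨m, n, hm, ?_⟩
  -- solve for lam
  rw [hcdef, hK] at hmc
  have hr2 : (r:ℝ)^2 ≠ 0 := by positivity
  have hT2 : (T:ℝ)^2 ≠ 0 := by positivity
  have h1r' : (1 + r^2) ≠ 0 := h1r.ne'
  have h4 : (n:ℝ)^2/r^2 - (1/(r^2*(1+r^2)) + lam) = -((m:ℝ)^2*π^2/T^2)/(1+r^2) := by
    rw [eq_div_iff h1r']
    linear_combination hmc
  have h5 : lam = (n:ℝ)^2/r^2 - 1/(r^2*(1+r^2)) + ((m:ℝ)^2*π^2/T^2)/(1+r^2) := by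
    linear_combination (-1 : ℝ) * h4
  rw [h5]
  field_simp
  ring


/-- spectrum of the Jacobi operator of a truncated Killing
cylinder `C_R^T` in hyperbolic 3-space with Dirichlet boundary conditions:
an eigenfunction exists iff
`λ = m²π²/((1+r²)T²) + (n²(1+r²) − 1)/(r²(1+r²))` for some `m ≥ 1`, `n ≥ 0`. -/
theorem killing_cylinder_dirichlet_spectrum
    (r T lam : ℝ) (hr : 0 < r) (hT : 0 < T) :
    (∃ u : ℝ → ℝ → ℝ,
      ContDiff ℝ 2 (Function.uncurry u) ∧
      (∀ t θ : ℝ, u t (θ + 2 * π) = u t θ) ∧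
      (∃ t ∈ Set.Icc (0 : ℝ) T, ∃ θ : ℝ, u t θ ≠ 0) ∧
      (∀ t ∈ Set.Icc (0 : ℝ) T, ∀ θ : ℝ,
        (1 / (1 + r ^ 2)) * deriv (deriv (fun x => u x θ)) t
          + (1 / r ^ 2) * deriv (deriv (u t)) θ
          + (1 / (r ^ 2 * (1 + r ^ 2)) + lam) * u t θ = 0) ∧
      (∀ θ : ℝ, u 0 θ = 0 ∧ u T θ = 0)) ↔
    (∃ m n : ℕ, 1 ≤ m ∧
      lam = (m : ℝ) ^ 2 * π ^ 2 / ((1 + r ^ 2) * T ^ 2)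
        + ((n : ℝ) ^ 2 * (1 + r ^ 2) - 1) / (r ^ 2 * (1 + r ^ 2))) := by
  constructor
  · rintro ⟨u, hu2, hper, hne, hpde, hbc⟩
    exact forward_dir r T lam hr hT u hu2 hper hne hpde hbc
  · rintro ⟨m, n, hm, hlam⟩
    exact reverse_dir r T lam hr hT m n hm hlam
end

section
/- Let r > 0 and T > 2πr, and define f : ℝ → ℝ by f(t) = sin(2πt/T). Then f(0) = f(T) = 0, ∫₀ᵀ f(t) dt = 0, and ∫₀ᵀ ( f′(t)²/(1+r²) − f(t)²/(r²(1+r²)) ) dt < 0. -/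
open Real

/-- Plateau–Rayleigh instability in hyperbolic space: for
`T > 2πr`, the test function `f(t) = sin(2πt/T)` vanishes at `0` and `T`,
has zero mean, and makes the Jacobi quadratic form negative. -/
theorem plateau_rayleigh_instability
    (r T : ℝ) (hr : 0 < r) (hT : 2 * π * r < T)
    (f : ℝ → ℝ) (hf : ∀ t, f t = Real.sin (2 * π * t / T)) :
    f 0 = 0 ∧ f T = 0 ∧ (∫ t in (0 : ℝ)..T, f t) = 0 ∧
    (∫ t in (0 : ℝ)..T,
      ((deriv f t) ^ 2 / (1 + r ^ 2) - (f t) ^ 2 / (r ^ 2 * (1 + r ^ 2)))) < 0 := by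
  have hπ : (0 : ℝ) < π := Real.pi_pos
  have hT0 : 0 < T := lt_trans (by positivity) hT
  set ω : ℝ := 2 * π / T with hωdef
  have hω0 : 0 < ω := by positivity
  have hωT : ω * T = 2 * π := by
    rw [hωdef]; field_simp
  have hωinv : ω⁻¹ * π = T / 2 := by
    rw [hωdef]; field_simp
  have hfe : f = fun t => Real.sin (ω * t) := by
    funext t; rw [hf, hωdef]; ring_nf
  have hderiv : ∀ t, deriv f t = ω * Real.cos (ω * t) := by
    intro t
    have h2 : HasDerivAt (fun x : ℝ => ω * x) ω t := by
      simpa using (hasDerivAt_id t).const_mul ω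
    have h1 : HasDerivAt (fun x : ℝ => Real.sin (ω * x)) (Real.cos (ω * t) * ω) t :=
      (Real.hasDerivAt_sin (ω * t)).comp t h2
    rw [hfe, h1.deriv]; ring
  refine ⟨by rw [hf]; simp, ?_, ?_, ?_⟩
  · rw [hf, show 2 * π * T / T = 2 * π by field_simp]
    exact Real.sin_two_pi
  · rw [hfe, intervalIntegral.integral_comp_mul_left _ hω0.ne']
    rw [mul_zero, hωT, integral_sin]
    simp [Real.cos_two_pi]
  · have hcos2 : (∫ t in (0:ℝ)..T, Real.cos (ω * t) ^ 2) = T / 2 := by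
      rw [intervalIntegral.integral_comp_mul_left (fun x => Real.cos x ^ 2) hω0.ne']
      rw [mul_zero, hωT, integral_cos_sq]
      simp only [Real.sin_two_pi, Real.cos_two_pi, Real.sin_zero, Real.cos_zero,
        smul_eq_mul, mul_zero, zero_mul, mul_one, one_mul, sub_zero, zero_add, sub_self]
      rw [show (2 * π / 2 : ℝ) = π by ring, hωinv]
    have hsin2 : (∫ t in (0:ℝ)..T, Real.sin (ω * t) ^ 2) = T / 2 := by
      rw [intervalIntegral.integral_comp_mul_left (fun x => Real.sin x ^ 2) hω0.ne']
      rw [mul_zero, hωT, integral_sin_sq]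
      simp only [Real.sin_two_pi, Real.cos_two_pi, Real.sin_zero, Real.cos_zero,
        smul_eq_mul, mul_zero, zero_mul, mul_one, one_mul, sub_zero, zero_add, sub_self]
      rw [show (2 * π / 2 : ℝ) = π by ring, hωinv]
    have hc1 : Continuous fun t : ℝ => Real.cos (ω * t) ^ 2 :=
      (Real.continuous_cos.comp (continuous_const.mul continuous_id)).pow 2
    have hc2 : Continuous fun t : ℝ => Real.sin (ω * t) ^ 2 :=
      (Real.continuous_sin.comp (continuous_const.mul continuous_id)).pow 2
    have hint : (∫ t in (0 : ℝ)..T,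
        ((deriv f t) ^ 2 / (1 + r ^ 2) - (f t) ^ 2 / (r ^ 2 * (1 + r ^ 2))))
        = (ω ^ 2 / (1 + r ^ 2)) * (T / 2) - (1 / (r ^ 2 * (1 + r ^ 2))) * (T / 2) := by
      have heq : ∀ t ∈ Set.uIcc (0:ℝ) T,
          (deriv f t) ^ 2 / (1 + r ^ 2) - (f t) ^ 2 / (r ^ 2 * (1 + r ^ 2))
          = (ω ^ 2 / (1 + r ^ 2)) * Real.cos (ω * t) ^ 2
            - (1 / (r ^ 2 * (1 + r ^ 2))) * Real.sin (ω * t) ^ 2 := by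
        intro t _
        rw [hderiv, hfe]; ring
      rw [intervalIntegral.integral_congr heq,
        intervalIntegral.integral_sub
          ((show Continuous fun t => ω ^ 2 / (1 + r ^ 2) * Real.cos (ω * t) ^ 2 from continuous_const.mul hc1).intervalIntegrable _ _)
          ((show Continuous fun t => 1 / (r ^ 2 * (1 + r ^ 2)) * Real.sin (ω * t) ^ 2 from continuous_const.mul hc2).intervalIntegrable _ _),
        intervalIntegral.integral_const_mul, intervalIntegral.integral_const_mul,
        hcos2, hsin2]
    rw [hint]
    have hωr : ω < 1 / r := by
      rw [hωdef, div_lt_div_iff₀ hT0 hr]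
      linarith
    have hr2 : (0:ℝ) < r ^ 2 := by positivity
    have hωr' : ω * r < 1 := (lt_div_iff₀ hr).mp hωr
    have hω2 : ω ^ 2 * r ^ 2 < 1 := by nlinarith [mul_pos hω0 hr]
    have h1r : (0:ℝ) < 1 + r ^ 2 := by positivity
    have hab : ω ^ 2 / (1 + r ^ 2) < 1 / (r ^ 2 * (1 + r ^ 2)) := by
      rw [div_lt_div_iff₀ h1r (by positivity)]
      nlinarith
    nlinarith
end

section
/- Let σ > 1 and δ > 0. Then ((σ+1)/(σ−1))^δ · (σ − δ) = σ + δ if and only if δ = 1. -/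
open Real

/-- for `σ > 1` and `δ > 0`, the transcendental equation
`((σ+1)/(σ−1))^δ (σ − δ) = σ + δ` holds iff `δ = 1`. -/
theorem transcendental_equation_ball
    (σ δ : ℝ) (hσ : 1 < σ) (hδ : 0 < δ) :
    ((σ + 1) / (σ - 1)) ^ δ * (σ - δ) = σ + δ ↔ δ = 1 := by
  have hσ1 : (0:ℝ) < σ - 1 := by linarith
  constructor
  · intro h
    have hq : (1:ℝ) < (σ + 1) / (σ - 1) := by
      rw [lt_div_iff₀ hσ1]; linarith
    have hqpos : (0:ℝ) < (σ + 1) / (σ - 1) := by linarith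
    have hrpos : 0 < ((σ + 1) / (σ - 1)) ^ δ := rpow_pos_of_pos hqpos δ
    have hδσ : δ < σ := by
      by_contra hc
      push_neg at hc
      have h1 : ((σ + 1) / (σ - 1)) ^ δ * (σ - δ) ≤ 0 :=
        mul_nonpos_of_nonneg_of_nonpos hrpos.le (by linarith)
      linarith
    have hsd : 0 < σ - δ := by linarith
    have hsp : 0 < σ + δ := by linarith
    -- log form
    have h2 : ((σ + 1) / (σ - 1)) ^ δ = (σ + δ) / (σ - δ) := by
      rw [eq_div_iff hsd.ne']; exact h
    have hlog := congrArg Real.log h2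
    rw [Real.log_rpow hqpos, Real.log_div hsp.ne' hsd.ne',
      Real.log_div (by linarith : (0:ℝ) < σ + 1).ne' hσ1.ne'] at hlog
    -- the function
    set f : ℝ → ℝ := fun x => Real.log (σ + x) - Real.log (σ - x) with hf
    have hf0 : f 0 = 0 := by simp [hf]
    have hderiv : ∀ x ∈ Set.Ioo (0:ℝ) σ, deriv f x = 1 / (σ + x) + 1 / (σ - x) := by
      intro x hx
      have hx1 : (0:ℝ) < σ + x := by have := hx.1; linarith
      have hx2 : (0:ℝ) < σ - x := by have := hx.2; linarith
      have d1 : HasDerivAt (fun y : ℝ => Real.log (σ + y)) (1 / (σ + x)) x := by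
        have : HasDerivAt (fun y : ℝ => σ + y) 1 x := (hasDerivAt_id x).const_add σ
        simpa using this.log hx1.ne'
      have d2 : HasDerivAt (fun y : ℝ => Real.log (σ - y)) (-1 / (σ - x)) x := by
        have : HasDerivAt (fun y : ℝ => σ - y) (-1) x := (hasDerivAt_id x).const_sub σ
        simpa using this.log hx2.ne'
      have := (d1.sub d2).deriv
      change deriv ((fun y => Real.log (σ + y)) - fun y => Real.log (σ - y)) x = _
      rw [this]; ring
    have hcont : ContinuousOn f (Set.Ico 0 σ) := by
      apply ContinuousOn.sub
      · apply ContinuousOn.log (by fun_prop)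
        intro x hx; have := hx.1; nlinarith [hσ.trans_le (le_refl σ)]
      · apply ContinuousOn.log (by fun_prop)
        intro x hx; have := hx.2; nlinarith
    have hmono : StrictMonoOn (deriv f) (interior (Set.Ico 0 σ)) := by
      rw [interior_Ico]
      intro x hx y hy hxy
      rw [hderiv x hx, hderiv y hy]
      have hx1 : (0:ℝ) < σ + x := by have := hx.1; linarith
      have hx2 : (0:ℝ) < σ - x := by have := hx.2; linarith
      have hy1 : (0:ℝ) < σ + y := by have := hy.1; linarith
      have hy2 : (0:ℝ) < σ - y := by have := hy.2; linarith
      rw [div_add_div _ _ hx1.ne' hx2.ne', div_add_div _ _ hy1.ne' hy2.ne',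
        div_lt_div_iff₀ (by positivity) (by positivity)]
      have hxy2 : x ^ 2 < y ^ 2 := by nlinarith [hx.1]
      nlinarith [hxy2, hσ]
    have hconv : StrictConvexOn ℝ (Set.Ico 0 σ) f :=
      hmono.strictConvexOn_of_deriv (convex_Ico 0 σ) hcont
    have h0m : (0:ℝ) ∈ Set.Ico (0:ℝ) σ := ⟨le_refl 0, by linarith⟩
    have h1m : (1:ℝ) ∈ Set.Ico (0:ℝ) σ := ⟨by norm_num, hσ⟩
    have hδm : δ ∈ Set.Ico (0:ℝ) σ := ⟨hδ.le, hδσ⟩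
    have hfδ : f δ = Real.log (σ + δ) - Real.log (σ - δ) := rfl
    have hf1 : f 1 = Real.log (σ + 1) - Real.log (σ - 1) := rfl
    -- hlog : δ * (log (σ+1) - log (σ-1)) = log (σ+δ) - log (σ-δ)
    rcases lt_trichotomy δ 1 with hlt | heq | hgt
    · exfalso
      have := hconv.2 h0m h1m (by norm_num) (by linarith : (0:ℝ) < 1 - δ) hδ (by ring)
      simp only [smul_eq_mul, mul_zero, mul_one, zero_add, hf0] at this
      rw [hfδ, hf1] at this
      nlinarith
    · exact heq
    · exfalso
      have hbδ : (0:ℝ) < 1 / δ := by positivity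
      have haδ : (0:ℝ) < 1 - 1 / δ := by
        rw [sub_pos, div_lt_one hδ]; exact hgt
      have hsum : (1 - 1 / δ) + 1 / δ = 1 := by ring
      have := hconv.2 h0m hδm hδ.ne haδ hbδ hsum
      simp only [smul_eq_mul, mul_zero, zero_add, hf0] at this
      have h1e : 1 / δ * δ = 1 := by field_simp
      rw [h1e, hfδ, hf1] at this
      have hδne : δ ≠ 0 := hδ.ne'
      rw [one_div, inv_mul_eq_div, lt_div_iff₀ hδ] at this
      nlinarith
  · intro h
    subst h
    rw [Real.rpow_one, div_mul_cancel₀ _ hσ1.ne']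
end

section
/- Let σ > 1 and set T = log((σ+1)/(σ−1)). Then π/(2T) < σ, and for every δ with 0 < δ < π/(2T) one has tan(Tδ) > 2σδ/(σ² − δ²). -/
open Real

-- arctan y < y for y > 0
lemma arctan_lt_self' {y : ℝ} (hy : 0 < y) : Real.arctan y < y := by
  have h0 : 0 < Real.arctan y := by
    have := Real.arctan_strictMono hy
    simpa [Real.arctan_zero] using this
  have := Real.lt_tan h0 (Real.arctan_lt_pi_div_two y)
  simpa [Real.tan_arctan] using this

-- key log inequality: for 0 < u < 1, 2u < log((1+u)/(1-u))
lemma two_mul_lt_log {u : ℝ} (h0 : 0 < u) (h1 : u < 1) :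
    2 * u < Real.log ((1 + u) / (1 - u)) := by
  set f : ℝ → ℝ := fun x => Real.log (1 + x) - Real.log (1 - x) - 2 * x with hf
  have hmono : StrictMonoOn f (Set.Ico (0:ℝ) 1) := by
    apply strictMonoOn_of_deriv_pos (convex_Ico 0 1)
    · apply ContinuousOn.sub
      apply ContinuousOn.sub
      · apply ContinuousOn.log (by fun_prop)
        intro x hx
        simp only [Set.mem_Ico] at hx
        nlinarith [hx.1]
      · apply ContinuousOn.log (by fun_prop)
        intro x hx
        simp only [Set.mem_Ico] at hx
        nlinarith [hx.2]
      · fun_prop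
    · intro x hx
      rw [interior_Ico] at hx
      obtain ⟨hx0, hx1⟩ := hx
      have ha : (1:ℝ) + x ≠ 0 := by nlinarith
      have hb : (1:ℝ) - x ≠ 0 := by nlinarith
      have d1 : HasDerivAt (fun x : ℝ => Real.log (1 + x)) (1 / (1 + x)) x := by
        simpa [Function.comp_def] using ((Real.hasDerivAt_log ha).comp x ((hasDerivAt_id x).const_add 1))
      have d2 : HasDerivAt (fun x : ℝ => Real.log (1 - x)) (-(1 / (1 - x))) x := by
        have := (Real.hasDerivAt_log hb).comp x ((hasDerivAt_id x).neg.const_add 1)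
        simpa [Function.comp_def] using this
      have d3 : HasDerivAt f (1 / (1 + x) - -(1 / (1 - x)) - 2) x := by
        simpa [hf, Pi.sub_def] using ((d1.sub d2).sub ((hasDerivAt_id x).const_mul 2))
      rw [d3.deriv]
      have h1x : (0:ℝ) < 1 + x := by linarith
      have h2x : (0:ℝ) < 1 - x := by linarith
      have : 1 / (1 + x) - -(1 / (1 - x)) - 2 = 2 * x ^ 2 / ((1 + x) * (1 - x)) := by
        field_simp; ring
      rw [this]
      positivity
  have key : f 0 < f u := hmono (by constructor <;> norm_num) ⟨le_of_lt h0, h1⟩ h0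
  have h1u : (0:ℝ) < 1 + u := by linarith
  have h2u : (0:ℝ) < 1 - u := by linarith
  rw [Real.log_div (ne_of_gt h1u) (ne_of_gt h2u)]
  simp only [hf, Real.log_one, sub_zero] at key
  norm_num at key
  linarith

/-- for `σ > 1` and `T = log((σ+1)/(σ−1))`, one has
`π/(2T) < σ` and `tan(Tδ) > 2σδ/(σ² − δ²)` for every `δ ∈ (0, π/(2T))`. -/
theorem tan_above_rational_branch
    (σ T : ℝ) (hσ : 1 < σ) (hT : T = Real.log ((σ + 1) / (σ - 1))) :
    π / (2 * T) < σ ∧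
    ∀ δ : ℝ, 0 < δ → δ < π / (2 * T) →
      2 * σ * δ / (σ ^ 2 - δ ^ 2) < Real.tan (T * δ) := by
  have hσ0 : (0:ℝ) < σ := by linarith
  have hu0 : 0 < 1/σ := by positivity
  have hu1 : 1/σ < 1 := by rw [div_lt_one hσ0]; linarith
  have hTeq : T = Real.log ((1 + 1/σ) / (1 - 1/σ)) := by
    rw [hT]
    congr 1
    field_simp
  have hTlb : 2 / σ < T := by
    have := two_mul_lt_log hu0 hu1
    rw [← hTeq] at this
    calc 2 / σ = 2 * (1/σ) := by ring
    _ < T := this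
  have hT0 : 0 < T := lt_trans (by positivity) hTlb
  have hπ4 : π < 4 := by linarith [Real.pi_lt_d2]
  have hpart1 : π / (2 * T) < σ := by
    rw [div_lt_iff₀ (by positivity)]
    have : 2 / σ * σ = 2 := by field_simp
    nlinarith [hTlb, hσ0]
  refine ⟨hpart1, fun δ hδ0 hδ1 => ?_⟩
  have hδσ : δ < σ := lt_trans hδ1 hpart1
  have hTδ : T * δ < π / 2 := by
    rw [lt_div_iff₀ (by norm_num : (0:ℝ) < 2)] at *
    have := (lt_div_iff₀ (by positivity : (0:ℝ) < 2 * T)).mp hδ1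
    nlinarith
  set θ := Real.arctan (δ / σ) with hθ
  have hθ0 : 0 < θ := by
    have := Real.arctan_strictMono (show (0:ℝ) < δ / σ by positivity)
    simpa [hθ, Real.arctan_zero] using this
  have hθlt : θ < δ / σ := arctan_lt_self' (by positivity)
  have h2θ : 2 * θ < T * δ := by
    have : 2 * (δ / σ) ≤ T * δ := by
      calc 2 * (δ/σ) = (2/σ) * δ := by ring
      _ ≤ T * δ := mul_le_mul_of_nonneg_right hTlb.le hδ0.le
    linarith
  have htan : Real.tan (2 * θ) < Real.tan (T * δ) := by
    apply Real.tan_lt_tan_of_nonneg_of_lt_pi_div_two (by positivity) hTδ h2θ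
  have hne : 1 - (δ/σ)^2 ≠ 0 := by
    have : δ/σ < 1 := (div_lt_one hσ0).mpr hδσ
    have h0 : 0 < δ/σ := by positivity
    nlinarith
  have hcomp : Real.tan (2 * θ) = 2 * σ * δ / (σ ^ 2 - δ ^ 2) := by
    rw [Real.tan_two_mul, hθ, Real.tan_arctan]
    rw [div_eq_div_iff hne (by nlinarith : σ^2 - δ^2 ≠ 0)]
    field_simp
  rwa [hcomp] at htan
end
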